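/- For each s ∈ {1,…,n}, H(s) = min_{i∈{0,…,s−1}, α∈ℝ} P_s(i,α). -/

import Mathlib

open scoped Classical

/-- `h_s(y; z_{1:s})` (0-indexed: coordinates `0,…,s−1` of `y`,`z`,`l`,`u` play the role of
the paper's coordinates `1,…,s`): the objective of the fused ℓ₀ proximal subproblem
`(1/2)Σ_{j<s}(y_j−z_j)² + λ₁ Σ_{j<s−1}|y_j−y_{j+1}|₀ + Σ_{j<s} ω_j(y_j)`,
with value `⊤` outside the box constraints. -/
noncomputable def hfun (lam1 lam2 : ℝ) (l u z : ℕ → ℝ) (s : ℕ) (y : ℕ → ℝ) : EReal :=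
  if ∀ j ∈ Finset.range s, l j ≤ y j ∧ y j ≤ u j then
    ((((1 : ℝ) / 2) * ∑ j ∈ Finset.range s, (y j - z j) ^ 2
      + lam1 * ∑ j ∈ Finset.range (s - 1), (if y j = y (j + 1) then (0 : ℝ) else 1)
      + lam2 * ∑ j ∈ Finset.range s, (if y j = 0 then (0 : ℝ) else 1) : ℝ) : EReal)
  else ⊤

/-- `H(0) = −λ₁` and, for `s ≥ 1`, `H(s) = min_{y ∈ ℝˢ} h_s(y; z_{1:s})`
(the minimum is attained; it equals the infimum). -/
noncomputable def Hfun (lam1 lam2 : ℝ) (l u z : ℕ → ℝ) : ℕ → EReal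
  | 0 => ((-lam1 : ℝ) : EReal)
  | s + 1 => ⨅ y : ℕ → ℝ, hfun lam1 lam2 l u z (s + 1) y

/-- `P_s(i,α) = H(i) + (1/2)Σ_{j=i+1}^{s}(α−z_j)² + Σ_{j=i+1}^{s} ω_j(α) + λ₁`
(0-indexed: the sums run over `j ∈ [i, s)`). -/
noncomputable def Pfun (lam1 lam2 : ℝ) (l u z : ℕ → ℝ) (s i : ℕ) (α : ℝ) : EReal :=
  Hfun lam1 lam2 l u z i +
    (if ∀ j ∈ Finset.Ico i s, l j ≤ α ∧ α ≤ u j then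
      ((((1 : ℝ) / 2) * ∑ j ∈ Finset.Ico i s, (α - z j) ^ 2
        + lam2 * ((s - i : ℕ) : ℝ) * (if α = 0 then (0 : ℝ) else 1) + lam1 : ℝ) : EReal)
    else ⊤)

/-- `P_s^*(α) = min_{i ∈ {0,…,s−1}} P_s(i,α)`. -/
noncomputable def Pstar (lam1 lam2 : ℝ) (l u z : ℕ → ℝ) (s : ℕ) (α : ℝ) : EReal :=
  ⨅ i ∈ Finset.range s, Pfun lam1 lam2 l u z s i α

/-! ### Auxiliary machinery -/

noncomputable def Fre (lam1 lam2 : ℝ) (z : ℕ → ℝ) (s : ℕ) (y : ℕ → ℝ) : ℝ :=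
  ((1 : ℝ) / 2) * ∑ j ∈ Finset.range s, (y j - z j) ^ 2
    + lam1 * ∑ j ∈ Finset.range (s - 1), (if y j = y (j + 1) then (0 : ℝ) else 1)
    + lam2 * ∑ j ∈ Finset.range s, (if y j = 0 then (0 : ℝ) else 1)

lemma hfun_eq (lam1 lam2 : ℝ) (l u z : ℕ → ℝ) (s : ℕ) (y : ℕ → ℝ) :
    hfun lam1 lam2 l u z s y =
      if ∀ j ∈ Finset.range s, l j ≤ y j ∧ y j ≤ u j then ((Fre lam1 lam2 z s y : ℝ) : EReal)
      else ⊤ := rfl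

lemma Fre_nonneg {lam1 lam2 : ℝ} (h1 : 0 ≤ lam1) (h2 : 0 ≤ lam2) (z : ℕ → ℝ) (s : ℕ)
    (y : ℕ → ℝ) : 0 ≤ Fre lam1 lam2 z s y := by
  have A : ∀ (m : ℕ) (f : ℕ → ℝ), (∀ j, 0 ≤ f j) → (0:ℝ) ≤ ∑ j ∈ Finset.range m, f j :=
    fun m f hf => Finset.sum_nonneg fun j _ => hf j
  unfold Fre
  have h3 : (0:ℝ) ≤ ∑ j ∈ Finset.range s, (y j - z j) ^ 2 :=
    A _ _ fun j => sq_nonneg _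
  have h4 : (0:ℝ) ≤ ∑ j ∈ Finset.range (s-1), (if y j = y (j + 1) then (0 : ℝ) else 1) :=
    A _ _ fun j => by positivity
  have h5 : (0:ℝ) ≤ ∑ j ∈ Finset.range s, (if y j = 0 then (0 : ℝ) else 1) :=
    A _ _ fun j => by positivity
  have := mul_nonneg h1 h4
  have := mul_nonneg h2 h5
  nlinarith

lemma hfun_nonneg {lam1 lam2 : ℝ} (h1 : 0 ≤ lam1) (h2 : 0 ≤ lam2) (l u z : ℕ → ℝ) (s : ℕ)
    (y : ℕ → ℝ) : (0 : EReal) ≤ hfun lam1 lam2 l u z s y := by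
  rw [hfun_eq]
  split
  · exact_mod_cast EReal.coe_nonneg.2 (Fre_nonneg h1 h2 z s y)
  · exact le_top

lemma Hfun_ne_bot {lam1 lam2 : ℝ} (h1 : 0 ≤ lam1) (h2 : 0 ≤ lam2) (l u z : ℕ → ℝ) (i : ℕ) :
    Hfun lam1 lam2 l u z i ≠ ⊥ := by
  cases i with
  | zero => exact EReal.coe_ne_bot _
  | succ k =>
      have : (0 : EReal) ≤ Hfun lam1 lam2 l u z (k+1) :=
        le_iInf fun y => hfun_nonneg h1 h2 l u z _ y
      exact fun hb => by simp [hb] at this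

lemma ereal_iInf_add_coe {ι : Sort*} [Nonempty ι] (f : ι → EReal) (c : ℝ) :
    (⨅ x, f x) + (c : EReal) = ⨅ x, (f x + (c : EReal)) := by
  apply le_antisymm
  · exact le_iInf fun x => add_le_add_left (iInf_le _ x) _
  · have h : ∀ x, (⨅ x, (f x + (c : EReal))) - (c : EReal) ≤ f x := by
      intro x
      have h1 : (⨅ x, (f x + (c : EReal))) ≤ f x + c := iInf_le _ x
      calc (⨅ x, (f x + (c : EReal))) - c ≤ (f x + c) - c := by
            rw [sub_eq_add_neg, sub_eq_add_neg]; exact add_le_add_left h1 _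
        _ = f x := EReal.add_sub_cancel_right
    have h2 : (⨅ x, (f x + (c : EReal))) - (c : EReal) ≤ ⨅ x, f x := le_iInf h
    calc (⨅ x, (f x + (c : EReal)))
        = (⨅ x, (f x + (c : EReal))) - c + c := EReal.sub_add_cancel.symm
      _ ≤ (⨅ x, f x) + c := add_le_add_left h2 _

lemma Fre_congr (lam1 lam2 : ℝ) (z : ℕ → ℝ) (s : ℕ) {y y' : ℕ → ℝ}
    (h : ∀ j < s, y j = y' j) : Fre lam1 lam2 z s y = Fre lam1 lam2 z s y' := by
  have e1 : ∑ j ∈ Finset.range s, (y j - z j) ^ 2 = ∑ j ∈ Finset.range s, (y' j - z j) ^ 2 :=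
    Finset.sum_congr rfl fun j hj => by rw [h j (Finset.mem_range.1 hj)]
  have e2 : ∑ j ∈ Finset.range (s-1), (if y j = y (j + 1) then (0:ℝ) else 1)
      = ∑ j ∈ Finset.range (s-1), (if y' j = y' (j + 1) then (0:ℝ) else 1) := by
    refine Finset.sum_congr rfl fun j hj => ?_
    have hj' := Finset.mem_range.1 hj
    have hjs : j < s := lt_of_lt_of_le hj' (Nat.sub_le _ _)
    have hj1 : j + 1 < s := by omega
    rw [h j hjs, h (j+1) hj1]
  have e3 : ∑ j ∈ Finset.range s, (if y j = 0 then (0:ℝ) else 1)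
      = ∑ j ∈ Finset.range s, (if y' j = 0 then (0:ℝ) else 1) :=
    Finset.sum_congr rfl fun j hj => by rw [h j (Finset.mem_range.1 hj)]
  unfold Fre
  rw [e1, e2, e3]

/-- Splitting `Fre` at a change-point `k+1`: `y` equals `α` on `[k+1, t]`. -/
lemma Fre_split (lam1 lam2 : ℝ) (z : ℕ → ℝ) {y : ℕ → ℝ} {α : ℝ} {k t : ℕ} (hkt : k + 1 ≤ t)
    (hα : ∀ j, k + 1 ≤ j → j ≤ t → y j = α) :
    Fre lam1 lam2 z (t + 1) y
      = Fre lam1 lam2 z (k + 1) y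
        + (((1:ℝ)/2) * ∑ j ∈ Finset.Ico (k+1) (t+1), (α - z j) ^ 2
           + lam2 * ((t + 1 - (k + 1) : ℕ) : ℝ) * (if α = 0 then (0:ℝ) else 1)
           + lam1 * (if y k = y (k + 1) then (0:ℝ) else 1)) := by
  have hsq : ∑ j ∈ Finset.range (t+1), (y j - z j) ^ 2
      = ∑ j ∈ Finset.range (k+1), (y j - z j) ^ 2
        + ∑ j ∈ Finset.Ico (k+1) (t+1), (α - z j) ^ 2 := by
    rw [Finset.range_eq_Ico,
      ← Finset.sum_Ico_consecutive _ (Nat.zero_le (k+1)) (by omega : k+1 ≤ t+1)]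
    congr 1
    · rw [Finset.range_eq_Ico]
    refine Finset.sum_congr rfl fun j hj => ?_
    obtain ⟨hj1, hj2⟩ := Finset.mem_Ico.1 hj
    rw [hα j hj1 (by omega)]
  have hind : ∑ j ∈ Finset.range (t+1), (if y j = 0 then (0:ℝ) else 1)
      = ∑ j ∈ Finset.range (k+1), (if y j = 0 then (0:ℝ) else 1)
        + ((t + 1 - (k + 1) : ℕ) : ℝ) * (if α = 0 then (0:ℝ) else 1) := by
    rw [Finset.range_eq_Ico,
      ← Finset.sum_Ico_consecutive _ (Nat.zero_le (k+1)) (by omega : k+1 ≤ t+1)]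
    congr 1
    · rw [Finset.range_eq_Ico]
    have : ∀ j ∈ Finset.Ico (k+1) (t+1), (if y j = 0 then (0:ℝ) else 1)
        = (if α = 0 then (0:ℝ) else 1) := by
      intro j hj
      obtain ⟨hj1, hj2⟩ := Finset.mem_Ico.1 hj
      rw [hα j hj1 (by omega)]
    rw [Finset.sum_congr rfl this, Finset.sum_const, Nat.card_Ico, nsmul_eq_mul]
  have hjump : ∑ j ∈ Finset.range (t + 1 - 1), (if y j = y (j+1) then (0:ℝ) else 1)
      = ∑ j ∈ Finset.range (k + 1 - 1), (if y j = y (j+1) then (0:ℝ) else 1)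
        + (if y k = y (k+1) then (0:ℝ) else 1) := by
    simp only [Nat.add_sub_cancel]
    rw [Finset.range_eq_Ico,
      ← Finset.sum_Ico_consecutive _ (Nat.zero_le k) (by omega : k ≤ t),
      Finset.sum_eq_sum_Ico_succ_bot (by omega : k < t)]
    have : ∑ j ∈ Finset.Ico (k+1) t, (if y j = y (j+1) then (0:ℝ) else 1) = 0 := by
      refine Finset.sum_eq_zero fun j hj => ?_
      obtain ⟨hj1, hj2⟩ := Finset.mem_Ico.1 hj
      rw [hα j hj1 (by omega), hα (j+1) (by omega) (by omega)]
      simp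
    rw [this]
    rw [← Finset.range_eq_Ico]
    ring
  unfold Fre
  rw [hsq, hind, hjump]
  ring

/-- `Fre` of a function constant `= α` on `[0, t]`. -/
lemma Fre_const (lam1 lam2 : ℝ) (z : ℕ → ℝ) {y : ℕ → ℝ} {α : ℝ} {t : ℕ}
    (hα : ∀ j, j ≤ t → y j = α) :
    Fre lam1 lam2 z (t + 1) y
      = ((1:ℝ)/2) * ∑ j ∈ Finset.Ico 0 (t+1), (α - z j) ^ 2
        + lam2 * ((t + 1 - 0 : ℕ) : ℝ) * (if α = 0 then (0:ℝ) else 1) := by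
  have hsq : ∑ j ∈ Finset.range (t+1), (y j - z j) ^ 2
      = ∑ j ∈ Finset.Ico 0 (t+1), (α - z j) ^ 2 := by
    rw [Finset.range_eq_Ico]
    exact Finset.sum_congr rfl fun j hj => by
      have : j ≤ t := by have := (Finset.mem_Ico.1 hj).2; omega
      rw [hα j this]
  have hjump : ∑ j ∈ Finset.range (t + 1 - 1), (if y j = y (j+1) then (0:ℝ) else 1) = 0 := by
    simp only [Nat.add_sub_cancel]
    refine Finset.sum_eq_zero fun j hj => ?_
    have hj' := Finset.mem_range.1 hj
    rw [hα j (by omega), hα (j+1) (by omega)]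
    simp
  have hind : ∑ j ∈ Finset.range (t+1), (if y j = 0 then (0:ℝ) else 1)
      = ((t + 1 - 0 : ℕ) : ℝ) * (if α = 0 then (0:ℝ) else 1) := by
    have : ∀ j ∈ Finset.range (t+1), (if y j = 0 then (0:ℝ) else 1)
        = (if α = 0 then (0:ℝ) else 1) := by
      intro j hj
      rw [hα j (by have := Finset.mem_range.1 hj; omega)]
    rw [Finset.sum_congr rfl this, Finset.sum_const, Finset.card_range, nsmul_eq_mul]
    norm_num
  unfold Fre
  rw [hsq, hind, hjump]
  ring


/-- for each `s ∈ {1,…,n}`, `H(s) = min_{i∈{0,…,s−1}, α∈ℝ} P_s(i,α)`. -/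
theorem stmt3 (n : ℕ) (hn : 1 ≤ n) (lam1 lam2 : ℝ) (hlam1 : 0 < lam1) (hlam2 : 0 < lam2)
    (l u z : ℕ → ℝ) (hlu : ∀ i < n, l i ≤ 0 ∧ 0 ≤ u i)
    (s : ℕ) (hs1 : 1 ≤ s) (hsn : s ≤ n) :
    Hfun lam1 lam2 l u z s = ⨅ i ∈ Finset.range s, ⨅ α : ℝ, Pfun lam1 lam2 l u z s i α := by
  obtain ⟨t, rfl⟩ : ∃ t, s = t + 1 := ⟨s - 1, by omega⟩
  have h1 : (0:ℝ) ≤ lam1 := hlam1.le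
  have h2 : (0:ℝ) ≤ lam2 := hlam2.le
  have hH : Hfun lam1 lam2 l u z (t+1) = ⨅ y : ℕ → ℝ, hfun lam1 lam2 l u z (t+1) y := rfl
  apply le_antisymm
  · refine le_iInf₂ fun i hi => le_iInf fun α => ?_
    have hi' : i < t + 1 := Finset.mem_range.1 hi
    by_cases hfeas : ∀ j ∈ Finset.Ico i (t+1), l j ≤ α ∧ α ≤ u j
    · rw [Pfun, if_pos hfeas]
      cases i with
      | zero =>
          set y : ℕ → ℝ := fun _ => α with hy
          have hyfeas : ∀ j ∈ Finset.range (t+1), l j ≤ y j ∧ y j ≤ u j := by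
            intro j hj
            exact hfeas j (Finset.mem_Ico.2 ⟨Nat.zero_le _, Finset.mem_range.1 hj⟩)
          have hFre : Fre lam1 lam2 z (t+1) y
              = ((1:ℝ)/2) * ∑ j ∈ Finset.Ico 0 (t+1), (α - z j) ^ 2
                + lam2 * ((t + 1 - 0 : ℕ) : ℝ) * (if α = 0 then (0:ℝ) else 1) :=
            Fre_const lam1 lam2 z (fun j _ => rfl)
          have hP : Hfun lam1 lam2 l u z 0
                + ((((1:ℝ)/2) * ∑ j ∈ Finset.Ico 0 (t+1), (α - z j) ^ 2
                  + lam2 * ((t+1 - 0 : ℕ) : ℝ) * (if α = 0 then (0:ℝ) else 1) + lam1 : ℝ) : EReal)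
              = ((Fre lam1 lam2 z (t+1) y : ℝ) : EReal) := by
            rw [show Hfun lam1 lam2 l u z 0 = ((-lam1:ℝ):EReal) from rfl, ← EReal.coe_add,
              EReal.coe_eq_coe_iff, hFre]
            ring
          rw [hP]
          refine le_trans (hH ▸ iInf_le _ y) ?_
          rw [hfun_eq, if_pos hyfeas]
      | succ k =>
          have hkt : k + 1 ≤ t := by omega
          have hHi : Hfun lam1 lam2 l u z (k+1)
              = ⨅ y' : ℕ → ℝ, hfun lam1 lam2 l u z (k+1) y' := rfl
          rw [hHi, ereal_iInf_add_coe]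
          refine le_iInf fun y' => ?_
          by_cases hy' : ∀ j ∈ Finset.range (k+1), l j ≤ y' j ∧ y' j ≤ u j
          · set y : ℕ → ℝ := fun j => if j < k+1 then y' j else α with hy
            have hyα : ∀ j, k + 1 ≤ j → j ≤ t → y j = α := by
              intro j hj1 _
              simp only [hy]
              rw [if_neg (by omega)]
            have hyfeas : ∀ j ∈ Finset.range (t+1), l j ≤ y j ∧ y j ≤ u j := by
              intro j hj
              have hj' := Finset.mem_range.1 hj
              by_cases hjk : j < k+1
              · simpa [hy, hjk, show j ≤ k by omega] using hy' j (Finset.mem_range.2 hjk)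
              · have : y j = α := by simp only [hy]; rw [if_neg hjk]
                rw [this]
                exact hfeas j (Finset.mem_Ico.2 ⟨by omega, hj'⟩)
            refine le_trans (hH ▸ iInf_le _ y) ?_
            rw [hfun_eq, if_pos hyfeas, hfun_eq, if_pos hy', ← EReal.coe_add,
              EReal.coe_le_coe_iff]
            have hsplit := Fre_split lam1 lam2 z hkt hyα
            have hcongr : Fre lam1 lam2 z (k+1) y = Fre lam1 lam2 z (k+1) y' :=
              Fre_congr lam1 lam2 z (k+1) (fun j hj => by simp only [hy]; rw [if_pos hj])
            rw [hsplit, hcongr]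
            have hjle : (if y k = y (k+1) then (0:ℝ) else 1) ≤ 1 := by split <;> norm_num
            have hml := mul_le_mul_of_nonneg_left hjle h1
            linarith
          · rw [hfun_eq, if_neg hy', EReal.top_add_coe]
            exact le_top
    · rw [Pfun, if_neg hfeas, EReal.add_top_of_ne_bot (Hfun_ne_bot h1 h2 l u z i)]
      exact le_top
  · rw [hH]
    refine le_iInf fun y => ?_
    by_cases hyf : ∀ j ∈ Finset.range (t+1), l j ≤ y j ∧ y j ≤ u j
    · have hex : ∃ i, ∀ m, i ≤ m → m ≤ t → y m = y t :=
        ⟨t, fun m hm1 hm2 => by rw [le_antisymm hm2 hm1]⟩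
      have hPi := Nat.find_spec hex
      have hit : Nat.find hex ≤ t :=
        Nat.find_le (fun m hm1 hm2 => by rw [le_antisymm hm2 hm1])
      have hfeasα : ∀ j ∈ Finset.Ico (Nat.find hex) (t+1), l j ≤ y t ∧ y t ≤ u j := by
        intro j hj
        obtain ⟨hj1, hj2⟩ := Finset.mem_Ico.1 hj
        rw [← hPi j hj1 (by omega)]
        exact hyf j (Finset.mem_range.2 hj2)
      refine le_trans (iInf₂_le (Nat.find hex) (Finset.mem_range.2 (by omega))) ?_
      refine le_trans (iInf_le _ (y t)) ?_
      rw [Pfun, if_pos hfeasα, hfun_eq, if_pos hyf]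
      rcases Nat.eq_zero_or_pos (Nat.find hex) with h0 | hpos
      · rw [h0] at hPi ⊢
        have hFre : Fre lam1 lam2 z (t+1) y
            = ((1:ℝ)/2) * ∑ j ∈ Finset.Ico 0 (t+1), (y t - z j) ^ 2
              + lam2 * ((t + 1 - 0 : ℕ) : ℝ) * (if y t = 0 then (0:ℝ) else 1) :=
          Fre_const lam1 lam2 z (fun j hj => hPi j (Nat.zero_le _) hj)
        refine le_of_eq ?_
        rw [show Hfun lam1 lam2 l u z 0 = ((-lam1:ℝ):EReal) from rfl, ← EReal.coe_add,
          EReal.coe_eq_coe_iff, hFre]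
        ring
      · obtain ⟨k, hk⟩ : ∃ k, Nat.find hex = k + 1 := ⟨Nat.find hex - 1, by omega⟩
        rw [hk] at hPi hit ⊢
        have hknot : ¬ ∀ m, k ≤ m → m ≤ t → y m = y t :=
          Nat.find_min hex (by omega)
        push_neg at hknot
        obtain ⟨m, hm1, hm2, hm3⟩ := hknot
        have hmk : m = k := by
          by_contra hne
          exact hm3 (hPi m (by omega) hm2)
        have hkne : y k ≠ y t := hmk ▸ hm3
        have hk1 : y (k+1) = y t := hPi (k+1) le_rfl (by omega)
        have hsplit := Fre_split lam1 lam2 z hit hPi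
        have hjump1 : (if y k = y (k+1) then (0:ℝ) else 1) = 1 := by
          rw [hk1, if_neg hkne]
        rw [hjump1] at hsplit
        have hyfk : ∀ j ∈ Finset.range (k+1), l j ≤ y j ∧ y j ≤ u j := by
          intro j hj
          exact hyf j (Finset.mem_range.2 (by have := Finset.mem_range.1 hj; omega))
        have hle : Hfun lam1 lam2 l u z (k+1) ≤ ((Fre lam1 lam2 z (k+1) y : ℝ) : EReal) := by
          have : Hfun lam1 lam2 l u z (k+1)
              = ⨅ y' : ℕ → ℝ, hfun lam1 lam2 l u z (k+1) y' := rfl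
          rw [this]
          refine le_trans (iInf_le _ y) ?_
          rw [hfun_eq, if_pos hyfk]
        calc Hfun lam1 lam2 l u z (k+1)
              + ((((1:ℝ)/2) * ∑ j ∈ Finset.Ico (k+1) (t+1), (y t - z j) ^ 2
                + lam2 * ((t+1 - (k+1) : ℕ) : ℝ) * (if y t = 0 then (0:ℝ) else 1) + lam1 : ℝ)
                : EReal)
            ≤ ((Fre lam1 lam2 z (k+1) y : ℝ) : EReal)
              + ((((1:ℝ)/2) * ∑ j ∈ Finset.Ico (k+1) (t+1), (y t - z j) ^ 2
                + lam2 * ((t+1 - (k+1) : ℕ) : ℝ) * (if y t = 0 then (0:ℝ) else 1) + lam1 : ℝ)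
                : EReal) := add_le_add_left hle _
          _ = ((Fre lam1 lam2 z (t+1) y : ℝ) : EReal) := by
              rw [← EReal.coe_add, EReal.coe_eq_coe_iff, hsplit]
              ring
    · rw [hfun_eq, if_neg hyf]
      exact le_top
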